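/- Let A ⊆ ℕ₀ satisfy Φ_r(A) ⊆ A and define X_k := (A ∩ [0, r^k)) / r^k ⊆ [0,1]. Then for all l ≥ k ≥ 1, X_l is contained in the closed r^{−k}-neighborhood of X_k. If moreover A ⊆ Φ_r(A), then X_k is contained in the closed r^{−k}-neighborhood of X_l. In particular, if Φ_r(A) = A, then the Hausdorff distance satisfies d_H(X_l, X_k) ≤ r^{−k} for all l ≥ k, so (X_k) is Cauchy in the Hausdorff metric. -/

import Mathlib

/-- `X_k = (A ∩ [0, r^k)) / r^k ⊆ [0,1]`. -/
def rescaled (r : ℕ) (A : Set ℕ) (k : ℕ) : Set ℝ :=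
  (fun n : ℕ => (n : ℝ) / (r : ℝ) ^ k) '' {n ∈ A | n < r ^ k}

lemma stmt16_div_pow_mem (r : ℕ) (A : Set ℕ) (hPhi : ∀ n ∈ A, n / r ∈ A) :
    ∀ j : ℕ, ∀ n ∈ A, n / r ^ j ∈ A := by
  intro j
  induction j with
  | zero => simp only [pow_zero, Nat.div_one]; exact fun n hn => hn
  | succ j ih =>
    intro n hn
    have h : n / r ^ (j + 1) = (n / r ^ j) / r := by
      rw [Nat.div_div_eq_div_mul, ← pow_succ]
    rw [h]
    exact hPhi _ (ih n hn)

lemma stmt16_sur_pow (r : ℕ) (A : Set ℕ) (hsur : ∀ n ∈ A, ∃ m ∈ A, m / r = n) :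
    ∀ j : ℕ, ∀ n ∈ A, ∃ m ∈ A, m / r ^ j = n := by
  intro j
  induction j with
  | zero => exact fun n hn => ⟨n, hn, by simp⟩
  | succ j ih =>
    intro n hn
    obtain ⟨m, hm, hmn⟩ := ih n hn
    obtain ⟨p, hp, hpm⟩ := hsur m hm
    refine ⟨p, hp, ?_⟩
    rw [pow_succ', ← Nat.div_div_eq_div_mul, hpm, hmn]

lemma stmt16_dist_bound (r k l : ℕ) (hr : 2 ≤ r) (hkl : k ≤ l) (n : ℕ) :
    |(n : ℝ) / (r : ℝ) ^ l - ((n / r ^ (l - k) : ℕ) : ℝ) / (r : ℝ) ^ k|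
      ≤ ((r : ℝ) ^ k)⁻¹ := by
  have hrpos : (0 : ℝ) < (r : ℝ) := by
    have : 0 < r := by omega
    exact_mod_cast this
  set j := l - k with hj
  have hl : l = k + j := by omega
  have hjpos : 0 < r ^ j := Nat.pow_pos (by omega)
  have hn : (n : ℝ) = (r : ℝ) ^ j * ((n / r ^ j : ℕ) : ℝ) + ((n % r ^ j : ℕ) : ℝ) := by
    exact_mod_cast (Nat.div_add_mod n (r ^ j)).symm
  have hslt : ((n % r ^ j : ℕ) : ℝ) < (r : ℝ) ^ j := by
    exact_mod_cast Nat.mod_lt n hjpos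
  have hsnn : (0 : ℝ) ≤ ((n % r ^ j : ℕ) : ℝ) := Nat.cast_nonneg _
  have hkpos : (0 : ℝ) < (r : ℝ) ^ k := by positivity
  have hjposR : (0 : ℝ) < (r : ℝ) ^ j := by positivity
  have hlposR : (0 : ℝ) < (r : ℝ) ^ l := by positivity
  have key : (n : ℝ) / (r : ℝ) ^ l - ((n / r ^ j : ℕ) : ℝ) / (r : ℝ) ^ k
      = ((n % r ^ j : ℕ) : ℝ) / (r : ℝ) ^ l := by
    rw [hl, pow_add]
    field_simp
    linear_combination hn
  rw [key, abs_of_nonneg (by positivity)]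
  rw [hl, pow_add]
  rw [div_le_iff₀ (by positivity)]
  rw [inv_mul_eq_div, le_div_iff₀ hkpos]
  calc ((n % r ^ j : ℕ) : ℝ) * ((r:ℝ)^k) ≤ (r:ℝ)^j * (r:ℝ)^k := by
        apply mul_le_mul_of_nonneg_right (le_of_lt hslt) (le_of_lt hkpos)
    _ = (r:ℝ)^k * (r:ℝ)^j := by ring

theorem stmt16 (r : ℕ) (hr : 2 ≤ r) (A : Set ℕ) (hPhi : ∀ n ∈ A, n / r ∈ A) :
    (∀ k l : ℕ, 1 ≤ k → k ≤ l →
      ∀ y ∈ rescaled r A l, ∃ x ∈ rescaled r A k, |y - x| ≤ ((r : ℝ) ^ k)⁻¹) ∧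
    ((∀ n ∈ A, ∃ m ∈ A, m / r = n) → ∀ k l : ℕ, 1 ≤ k → k ≤ l →
      ∀ x ∈ rescaled r A k, ∃ y ∈ rescaled r A l, |x - y| ≤ ((r : ℝ) ^ k)⁻¹) ∧
    ((fun n : ℕ => n / r) '' A = A → ∀ k l : ℕ, 1 ≤ k → k ≤ l →
      Metric.hausdorffDist (rescaled r A l) (rescaled r A k) ≤ ((r : ℝ) ^ k)⁻¹) := by
  have hrpos : 0 < r := by omega
  have part1 : ∀ k l : ℕ, 1 ≤ k → k ≤ l →
      ∀ y ∈ rescaled r A l, ∃ x ∈ rescaled r A k, |y - x| ≤ ((r : ℝ) ^ k)⁻¹ := by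
    intro k l hk hkl y hy
    obtain ⟨n, ⟨hnA, hnl⟩, rfl⟩ := hy
    refine ⟨((n / r ^ (l - k) : ℕ) : ℝ) / (r : ℝ) ^ k, ⟨n / r ^ (l - k),
      ⟨stmt16_div_pow_mem r A hPhi _ n hnA, ?_⟩, rfl⟩, stmt16_dist_bound r k l hr hkl n⟩
    rw [Nat.div_lt_iff_lt_mul (Nat.pow_pos hrpos), ← pow_add]
    have : k + (l - k) = l := by omega
    rw [this]; exact hnl
  have part2 : (∀ n ∈ A, ∃ m ∈ A, m / r = n) → ∀ k l : ℕ, 1 ≤ k → k ≤ l →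
      ∀ x ∈ rescaled r A k, ∃ y ∈ rescaled r A l, |x - y| ≤ ((r : ℝ) ^ k)⁻¹ := by
    intro hsur k l hk hkl x hx
    obtain ⟨m, ⟨hmA, hmk⟩, rfl⟩ := hx
    obtain ⟨n, hnA, hnm⟩ := stmt16_sur_pow r A hsur (l - k) m hmA
    have hnl : n < r ^ l := by
      have h1 : n / r ^ (l - k) < r ^ k := hnm ▸ hmk
      rw [Nat.div_lt_iff_lt_mul (Nat.pow_pos hrpos), ← pow_add] at h1
      have : k + (l - k) = l := by omega
      rwa [this] at h1
    refine ⟨(n : ℝ) / (r : ℝ) ^ l, ⟨n, ⟨hnA, hnl⟩, rfl⟩, ?_⟩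
    rw [abs_sub_comm]
    have := stmt16_dist_bound r k l hr hkl n
    rwa [hnm] at this
  refine ⟨part1, part2, ?_⟩
  intro hEq k l hk hkl
  have hsur : ∀ n ∈ A, ∃ m ∈ A, m / r = n := by
    intro n hn
    rw [← hEq] at hn
    obtain ⟨m, hm, hmn⟩ := hn
    exact ⟨m, hm, hmn⟩
  apply Metric.hausdorffDist_le_of_mem_dist (by positivity)
  · intro x hx
    obtain ⟨y, hy, hxy⟩ := part1 k l hk hkl x hx
    exact ⟨y, hy, by rwa [Real.dist_eq]⟩
  · intro y hy
    obtain ⟨x, hx, hyx⟩ := part2 hsur k l hk hkl y hy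
    exact ⟨x, hx, by rwa [Real.dist_eq]⟩
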